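/- arXiv:1403.0700 — 2 statements merged into one kernel-verified Lean document; each statement's English description precedes it below -/
import Mathlib

section
/- For symmetric positive definite matrices X, Y and any invertible matrix M, the symmetrized Stein divergence is affine invariant: J(MᵀXM, MᵀYM) = J(X,Y), where J(X,Y) = log det((X+Y)/2) − (1/2) log det(XY). -/
open Matrix

/-- Apply a scalar function spectrally to a (Hermitian) matrix:
`matFun f X = U * diagonal (f ∘ eigenvalues) * Uᴴ` using the spectral decomposition. -/
noncomputable def matFun {d : ℕ} (f : ℝ → ℝ) (X : Matrix (Fin d) (Fin d) ℝ) :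
    Matrix (Fin d) (Fin d) ℝ :=
  if h : X.IsHermitian then
    (h.eigenvectorUnitary : Matrix (Fin d) (Fin d) ℝ) * Matrix.diagonal (f ∘ h.eigenvalues) *
      star (h.eigenvectorUnitary : Matrix (Fin d) (Fin d) ℝ)
  else 0

/-- Spectral matrix logarithm. -/
noncomputable def mlog {d : ℕ} : Matrix (Fin d) (Fin d) ℝ → Matrix (Fin d) (Fin d) ℝ :=
  matFun Real.log

/-- Spectral matrix real power. -/
noncomputable def mpow {d : ℕ} (c : ℝ) : Matrix (Fin d) (Fin d) ℝ → Matrix (Fin d) (Fin d) ℝ :=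
  matFun (fun t => t ^ c)

/-- Spectral (SPD) matrix square root. -/
noncomputable def msqrt {d : ℕ} : Matrix (Fin d) (Fin d) ℝ → Matrix (Fin d) (Fin d) ℝ :=
  matFun Real.sqrt

/-- Inverse of the SPD square root. -/
noncomputable def minvsqrt {d : ℕ} (X : Matrix (Fin d) (Fin d) ℝ) : Matrix (Fin d) (Fin d) ℝ :=
  (msqrt X)⁻¹

/-- Affine invariant Riemannian distance on SPD matrices. -/
noncomputable def dg {d : ℕ} (X Y : Matrix (Fin d) (Fin d) ℝ) : ℝ :=
  Real.sqrt (((mlog (minvsqrt X * Y * minvsqrt X)) ^ 2).trace)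

/-- Manifold logarithm map at base point `A`. -/
noncomputable def logMap {d : ℕ} (A B : Matrix (Fin d) (Fin d) ℝ) : Matrix (Fin d) (Fin d) ℝ :=
  msqrt A * mlog (minvsqrt A * B * minvsqrt A) * msqrt A

/-- Manifold exponential map at base point `A`. -/
noncomputable def expMap {d : ℕ} (A Y : Matrix (Fin d) (Fin d) ℝ) : Matrix (Fin d) (Fin d) ℝ :=
  msqrt A * NormedSpace.exp (minvsqrt A * Y * minvsqrt A) * msqrt A

/-- Symmetrized Stein divergence. -/
noncomputable def steinDiv {d : ℕ} (X Y : Matrix (Fin d) (Fin d) ℝ) : ℝ :=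
  Real.log ((((1 : ℝ) / 2) • (X + Y)).det) - (1 / 2) * Real.log ((X * Y).det)

theorem stmt6 {d : ℕ} (X Y M : Matrix (Fin d) (Fin d) ℝ) (hX : X.PosDef) (hY : Y.PosDef)
    (hM : IsUnit M.det) :
    steinDiv (Mᵀ * X * M) (Mᵀ * Y * M) = steinDiv X Y := by
  have hm : M.det ≠ 0 := hM.ne_zero
  have hAd : (((1:ℝ)/2) • (X + Y)).det ≠ 0 := by
    rw [Matrix.det_smul]
    exact mul_ne_zero (pow_ne_zero _ (by norm_num)) (ne_of_gt (hX.add_posSemidef hY.posSemidef).det_pos)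
  have hXd : X.det ≠ 0 := ne_of_gt hX.det_pos
  have hYd : Y.det ≠ 0 := ne_of_gt hY.det_pos
  have h1 : ((1:ℝ)/2) • (Mᵀ * X * M + Mᵀ * Y * M) = Mᵀ * (((1:ℝ)/2) • (X + Y)) * M := by
    rw [Matrix.mul_smul, Matrix.smul_mul, Matrix.mul_add, Matrix.add_mul]
  unfold steinDiv
  rw [h1]
  simp only [Matrix.det_mul, Matrix.det_transpose]
  have key : M.det * (((1:ℝ)/2) • (X + Y)).det * M.det
      = M.det^2 * (((1:ℝ)/2) • (X + Y)).det := by ring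
  have key2 : M.det * X.det * M.det * (M.det * Y.det * M.det)
      = (M.det^2)^2 * (X.det * Y.det) := by ring
  rw [key, key2, Real.log_mul (pow_ne_zero 2 hm) hAd,
    Real.log_mul (pow_ne_zero 2 (pow_ne_zero 2 hm)) (mul_ne_zero hXd hYd),
    Real.log_pow, Real.log_mul hXd hYd]
  rw [Real.log_pow, Real.log_pow]
  push_cast
  ring
end

section
/- For SPD matrices X, Y, the determinant inequality det((X+Y)/2) ≥ sqrt(det X · det Y) holds, with equality if and only if X = Y. -/
open Matrix

private lemma amgm_sqrt {t : ℝ} (ht : 0 ≤ t) : Real.sqrt t ≤ (1 + t) / 2 := by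
  nlinarith [sq_nonneg (Real.sqrt t - 1), Real.sq_sqrt ht]

private lemma amgm_sqrt_lt {t : ℝ} (ht : 0 ≤ t) (hne : t ≠ 1) : Real.sqrt t < (1 + t) / 2 := by
  have h1 : Real.sqrt t - 1 ≠ 0 := by
    intro h
    have hs : Real.sqrt t = 1 := by linarith
    exact hne (by nlinarith [Real.sq_sqrt ht])
  nlinarith [Real.sq_sqrt ht, mul_self_pos.mpr h1]

private lemma posDef_conj {d : ℕ} {A B : Matrix (Fin d) (Fin d) ℝ} (hA : A.PosDef)
    (hB : IsUnit B) : (Bᴴ * A * B).PosDef := by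
  exact hA.conjTranspose_mul_mul_same (Matrix.mulVec_injective_iff_isUnit.mpr hB)

theorem stmt19 {d : ℕ} (X Y : Matrix (Fin d) (Fin d) ℝ) (hX : X.PosDef) (hY : Y.PosDef) :
    Real.sqrt (X.det * Y.det) ≤ (((1 : ℝ) / 2) • (X + Y)).det ∧
      ((((1 : ℝ) / 2) • (X + Y)).det = Real.sqrt (X.det * Y.det) ↔ X = Y) := by
  classical
  set S := (open scoped MatrixOrder in CFC.sqrt X) with hSdef
  have hS : S.PosSemidef := by open scoped MatrixOrder in exact (CFC.sqrt_nonneg X).posSemidef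
  have hSH : S.IsHermitian := hS.1
  have hSS : S * S = X := by
    open scoped MatrixOrder in exact CFC.sqrt_mul_sqrt_self X hX.posSemidef.nonneg
  have hdetX : 0 < X.det := hX.det_pos
  have hdetSS : S.det * S.det = X.det := by rw [← Matrix.det_mul, hSS]
  have hdetSne : S.det ≠ 0 := fun h => by rw [h, zero_mul] at hdetSS; exact hdetX.ne hdetSS
  have hSu : IsUnit S := (Matrix.isUnit_iff_isUnit_det S).mpr hdetSne.isUnit
  have hSiu : IsUnit S⁻¹ := Matrix.isUnit_nonsing_inv_iff.mpr hSu
  have hSinvH : (S⁻¹).IsHermitian := hSH.inv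
  set Z := S⁻¹ * Y * S⁻¹ with hZdef
  have hZ : Z.PosDef := by
    have := posDef_conj hY hSiu
    rwa [hSinvH.eq] at this
  have hSZS : S * Z * S = Y := by
    have h1 : S * S⁻¹ = 1 := Matrix.mul_nonsing_inv S hdetSne.isUnit
    have h2 : S⁻¹ * S = 1 := Matrix.nonsing_inv_mul S hdetSne.isUnit
    calc S * (S⁻¹ * Y * S⁻¹) * S = (S * S⁻¹) * Y * (S⁻¹ * S) := by
          simp only [Matrix.mul_assoc]
        _ = Y := by rw [h1, h2, one_mul, mul_one]
  have key : X + Y = S * (1 + Z) * S := by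
    rw [mul_add, add_mul, mul_one, hSS, hSZS]
  have hH : Z.IsHermitian := hZ.1
  set lam := hH.eigenvalues with hlam
  have hlpos : ∀ i, 0 < lam i := fun i => hZ.eigenvalues_pos i
  set U : Matrix (Fin d) (Fin d) ℝ := (hH.eigenvectorUnitary : Matrix (Fin d) (Fin d) ℝ)
    with hUdef
  have hUU : U * star U = 1 := Matrix.mem_unitaryGroup_iff.mp hH.eigenvectorUnitary.2
  have hspec : Z = U * Matrix.diagonal lam * star U := by
    have := hH.spectral_theorem
    rwa [RCLike.ofReal_real_eq_id, Function.id_comp] at this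
  have hdet1Z : (1 + Z).det = ∏ i, (1 + lam i) := by
    have h1 : 1 + Z = U * Matrix.diagonal (fun i => 1 + lam i) * star U := by
      have : Matrix.diagonal (fun i : Fin d => 1 + lam i) =
          1 + Matrix.diagonal lam := by
        rw [← Matrix.diagonal_one, ← Matrix.diagonal_add]
      rw [this, mul_add, add_mul, mul_one, hUU, ← hspec]
    rw [h1, Matrix.det_mul_right_comm, hUU, one_mul, Matrix.det_diagonal]
  have hdetZ : Z.det = ∏ i, lam i := by
    have := hH.det_eq_prod_eigenvalues
    simpa using this
  have hdetY : Y.det = X.det * Z.det := by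
    rw [← hSZS, Matrix.det_mul, Matrix.det_mul, ← hdetSS]; ring
  have hprodsqrt_nonneg : 0 ≤ ∏ i, Real.sqrt (lam i) :=
    Finset.prod_nonneg fun i _ => Real.sqrt_nonneg _
  have hsq : (∏ i, Real.sqrt (lam i)) ^ 2 = ∏ i, lam i := by
    rw [← Finset.prod_pow]
    exact Finset.prod_congr rfl fun i _ => Real.sq_sqrt (hlpos i).le
  have hsqrtXY : Real.sqrt (X.det * Y.det) = X.det * ∏ i, Real.sqrt (lam i) := by
    have : X.det * Y.det = (X.det * ∏ i, Real.sqrt (lam i)) ^ 2 := by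
      rw [mul_pow, hsq, ← hdetZ, hdetY]; ring
    rw [this, Real.sqrt_sq (by positivity)]
  have hLHS : (((1 : ℝ) / 2) • (X + Y)).det = X.det * ∏ i, ((1 + lam i) / 2) := by
    rw [Matrix.det_smul, key, Matrix.det_mul, Matrix.det_mul, hdet1Z, ← hdetSS,
      Finset.prod_div_distrib, Finset.prod_const]
    simp only [Finset.card_univ, Fintype.card_fin]
    ring_nf
    rw [one_div]
  have hterm : ∀ i ∈ Finset.univ, Real.sqrt (lam i) ≤ (1 + lam i) / 2 :=
    fun i _ => amgm_sqrt (hlpos i).le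
  constructor
  · rw [hsqrtXY, hLHS]
    exact mul_le_mul_of_nonneg_left
      (Finset.prod_le_prod (fun i _ => Real.sqrt_nonneg _) hterm) hdetX.le
  · constructor
    · intro heq
      rw [hsqrtXY, hLHS] at heq
      have hprodeq : (∏ i, ((1 + lam i) / 2)) = ∏ i, Real.sqrt (lam i) :=
        mul_left_cancel₀ hdetX.ne' heq
      have hall : ∀ i, lam i = 1 := by
        by_contra hc
        push_neg at hc
        obtain ⟨j, hj⟩ := hc
        have hlt : (∏ i, Real.sqrt (lam i)) < ∏ i, ((1 + lam i) / 2) :=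
          Finset.prod_lt_prod (fun i _ => Real.sqrt_pos.mpr (hlpos i)) hterm
            ⟨j, Finset.mem_univ j, amgm_sqrt_lt (hlpos j).le hj⟩
        rw [hprodeq] at hlt
        exact lt_irrefl _ hlt
      have hZ1 : Z = 1 := by
        rw [hspec]
        have hd1 : Matrix.diagonal lam = 1 := by
          have hl : lam = fun _ => (1 : ℝ) := funext hall
          rw [hl]
          exact Matrix.diagonal_one
        rw [hd1, mul_one, hUU]
      rw [← hSS, ← hSZS, hZ1, mul_one]
    · intro heq
      subst heq
      have h2 : ((1 : ℝ) / 2) • (X + X) = X := by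
        rw [← two_smul ℝ X, smul_smul]; norm_num
      rw [h2, Real.sqrt_mul_self hdetX.le]
end
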